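/- Assume α ≥ γ ≥ β. Then the maximum of T₁ over the interval [γ/2, α/2] equals α/2 + β + γ/2 and is attained at x = γ/2, and the minimum of T₁ over [γ/2, α/2] equals β + γ and is attained at x = α/2. -/

import Mathlib

open Set

noncomputable section

/-- `AR₂(x) = √(β² + (2x − γ)² − 2β(2x − γ)·cos C)`, where
`cos C = (α² + β² − γ²)/(2αβ)` by the Cosine Law. -/
def AR2 (α β γ : ℝ) (x : ℝ) : ℝ :=
  Real.sqrt (β ^ 2 + (2 * x - γ) ^ 2
    - 2 * β * (2 * x - γ) * ((α ^ 2 + β ^ 2 - γ ^ 2) / (2 * α * β)))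

/-- `CR₁(x) = √(β² + (γ − 2x)² − 2β(γ − 2x)·cos A)`, where
`cos A = (β² + γ² − α²)/(2βγ)` by the Cosine Law. -/
def CR1 (α β γ : ℝ) (x : ℝ) : ℝ :=
  Real.sqrt (β ^ 2 + (γ - 2 * x) ^ 2
    - 2 * β * (γ - 2 * x) * ((β ^ 2 + γ ^ 2 - α ^ 2) / (2 * β * γ)))

/-- Worst-case evacuation cost of OppositeSearch in Configuration 1. -/
def T1 (α β γ : ℝ) (x : ℝ) : ℝ :=
  α / 2 + γ - x + max (AR2 α β γ x) (max β (2 * x - γ))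

/-- Worst-case evacuation cost of OppositeSearch in Configuration 2. -/
def T2 (α β γ : ℝ) (x : ℝ) : ℝ :=
  α / 2 + x + max (CR1 α β γ x) (max β (γ - 2 * x))

/-- Case `α ≥ γ ≥ β`, Configuration 1: the maximum of `T₁` over `[γ/2, α/2]` is
`α/2 + β + γ/2`, attained at `x = γ/2`, and the minimum is `β + γ`, attained at
`x = α/2`. -/
theorem stmt12 (α β γ : ℝ) (hα : 0 < α) (hβ : 0 < β) (hγ : 0 < γ)
    (h1 : α < β + γ) (h2 : β < α + γ) (h3 : γ < α + β)
    (h4 : α ^ 2 ≤ β ^ 2 + γ ^ 2) (h5 : β ^ 2 ≤ α ^ 2 + γ ^ 2)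
    (h6 : γ ^ 2 ≤ α ^ 2 + β ^ 2)
    (hαγ : γ ≤ α) (hγβ : β ≤ γ) :
    IsGreatest (T1 α β γ '' Icc (γ / 2) (α / 2)) (α / 2 + β + γ / 2) ∧
      T1 α β γ (γ / 2) = α / 2 + β + γ / 2 ∧
      IsLeast (T1 α β γ '' Icc (γ / 2) (α / 2)) (β + γ) ∧
      T1 α β γ (α / 2) = β + γ := by
  have key : ∀ x ∈ Icc (γ / 2) (α / 2), T1 α β γ x = α / 2 + γ - x + β := by
    rintro x ⟨hx1, hx2⟩
    have hu0 : 0 ≤ 2 * x - γ := by linarith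
    have hu1 : 2 * x - γ ≤ α - γ := by linarith
    have hsimp : 2 * β * (2 * x - γ) * ((α ^ 2 + β ^ 2 - γ ^ 2) / (2 * α * β))
        = (2 * x - γ) * (α ^ 2 + β ^ 2 - γ ^ 2) / α := by
      field_simp
    have hAR : AR2 α β γ x ≤ β := by
      unfold AR2
      rw [hsimp]
      have hineq : β ^ 2 + (2 * x - γ) ^ 2
          - (2 * x - γ) * (α ^ 2 + β ^ 2 - γ ^ 2) / α ≤ β ^ 2 := by
        have h' : (2 * x - γ) ^ 2 ≤ (2 * x - γ) * (α ^ 2 + β ^ 2 - γ ^ 2) / α := by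
          rw [le_div_iff₀ hα]
          nlinarith [mul_nonneg hu0 (sub_nonneg.mpr hαγ), mul_nonneg hu0 hβ.le,
            mul_nonneg hu0 hγ.le, sq_nonneg β]
        linarith
      calc Real.sqrt (β ^ 2 + (2 * x - γ) ^ 2
            - (2 * x - γ) * (α ^ 2 + β ^ 2 - γ ^ 2) / α)
          ≤ Real.sqrt (β ^ 2) := Real.sqrt_le_sqrt hineq
        _ = β := Real.sqrt_sq hβ.le
    unfold T1
    rw [max_eq_left (show 2 * x - γ ≤ β by linarith), max_eq_right hAR]
  have hm1 : γ / 2 ∈ Icc (γ / 2) (α / 2) := ⟨le_refl _, by linarith⟩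
  have hm2 : α / 2 ∈ Icc (γ / 2) (α / 2) := ⟨by linarith, le_refl _⟩
  have e1 : T1 α β γ (γ / 2) = α / 2 + β + γ / 2 := by rw [key _ hm1]; ring
  have e2 : T1 α β γ (α / 2) = β + γ := by rw [key _ hm2]; ring
  refine ⟨⟨⟨γ / 2, hm1, e1⟩, ?_⟩, e1, ⟨⟨α / 2, hm2, e2⟩, ?_⟩, e2⟩
  · rintro y ⟨x, hx, rfl⟩
    rw [key x hx]
    have := hx.1
    linarith
  · rintro y ⟨x, hx, rfl⟩
    rw [key x hx]
    have := hx.2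
    linarith
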